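/- For every prime ℓ > 7 and every integer a with a² ≤ 8 (so a ∈ {0, ±1, ±2}), and also for a = ±3, the congruence 1·2^((ℓ−3)/2) ≡ a (mod ℓ) is impossible; consequently there is no elliptic curve trace value c₂ ∈ {0,±1,±2} and no semistable trace ±3 matching the twisted trace at 2. -/
import Mathlib


theorem stmt_15 : ∀ ℓ : ℕ, ℓ.Prime → 7 < ℓ → ∀ c : ℤ, |c| ≤ 3 →
    (2 : ZMod ℓ) ^ ((ℓ - 3) / 2) ≠ (c : ZMod ℓ) := by
  intro ℓ hp hl c hc h
  haveI : Fact ℓ.Prime := ⟨hp⟩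
  have hodd : ℓ % 2 = 1 := Nat.odd_iff.mp (hp.odd_of_ne_two (by omega))
  set k := (ℓ - 3) / 2 with hk
  have hexp : 2 * k + 2 = ℓ - 1 := by omega
  have h2 : (2 : ZMod ℓ) ≠ 0 := by
    intro hz
    have : ((2 : ℕ) : ZMod ℓ) = 0 := by exact_mod_cast hz
    have := (ZMod.natCast_eq_zero_iff 2 ℓ).mp this
    have := Nat.le_of_dvd (by norm_num) this
    omega
  have hfermat : (2 : ZMod ℓ) ^ (ℓ - 1) = 1 := ZMod.pow_card_sub_one_eq_one h2
  have hsq : ((2 : ZMod ℓ) * (c : ZMod ℓ)) ^ 2 = 1 := by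
    have : ((2 : ZMod ℓ) * (2 : ZMod ℓ) ^ k) ^ 2 = 1 := by
      rw [mul_pow, ← pow_mul, ← pow_add, show 2 + k * 2 = ℓ - 1 by omega]
      exact hfermat
    rwa [h] at this
  have : (2 : ZMod ℓ) * c = 1 ∨ (2 : ZMod ℓ) * c = -1 := by
    rcases mul_self_eq_one_iff.mp (by rwa [sq] at hsq) with h1 | h1
    · exact Or.inl h1
    · exact Or.inr h1
  rcases this with h1 | h1
  · have : ((2 * c - 1 : ℤ) : ZMod ℓ) = 0 := by push_cast; rw [h1]; ring
    have hd : (ℓ : ℤ) ∣ 2 * c - 1 := (ZMod.intCast_zmod_eq_zero_iff_dvd _ _).mp this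
    rcases abs_le.mp hc with ⟨h3, h4⟩
    rcases lt_trichotomy (2 * c - 1) 0 with hs | hs | hs
    · have := Int.le_of_dvd (by omega) (dvd_neg.mpr hd); omega
    · omega
    · have := Int.le_of_dvd hs hd; omega
  · have : ((2 * c + 1 : ℤ) : ZMod ℓ) = 0 := by push_cast; rw [h1]; ring
    have hd : (ℓ : ℤ) ∣ 2 * c + 1 := (ZMod.intCast_zmod_eq_zero_iff_dvd _ _).mp this
    rcases abs_le.mp hc with ⟨h3, h4⟩
    rcases lt_trichotomy (2 * c + 1) 0 with hs | hs | hs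
    · have := Int.le_of_dvd (by omega) (dvd_neg.mpr hd); omega
    · omega
    · have := Int.le_of_dvd hs hd; omega
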